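/- The pair L_n = ( [[0,L_n],[-L_nᵀ,0]], [[0,R_n],[-R_nᵀ,0]] ) of (2n-1)×(2n-1) matrices is equivalent to the direct sum (L_n, R_n) ⊕ (L_nᵀ, R_nᵀ). -/

import Mathlib

open Matrix

/-- The `(n-1) × n` matrix `[I | 0]`. -/
def Lmat {F : Type*} [Field F] (n : ℕ) : Matrix (Fin (n - 1)) (Fin n) F :=
  Matrix.of fun i j => if (i : ℕ) = (j : ℕ) then 1 else 0

/-- The `(n-1) × n` matrix `[0 | I]`. -/
def Rmat {F : Type*} [Field F] (n : ℕ) : Matrix (Fin (n - 1)) (Fin n) F :=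
  Matrix.of fun i j => if (i : ℕ) + 1 = (j : ℕ) then 1 else 0

/-- The pair `L_n` is equivalent to `(L_n, R_n) ⊕ (L_nᵀ, R_nᵀ)`; the direct sum
`L_n ⊕ L_nᵀ` (with rows indexed by `Fin (n-1) ⊕ Fin n` and columns by
`Fin n ⊕ Fin (n-1)`) is pulled back to column index `Fin (n-1) ⊕ Fin n`
by the canonical swap equivalence. -/
theorem Ln_pair_equivalent_to_directSum {F : Type*} [Field F] {n : ℕ} :
    ∃ (R S : Matrix (Fin (n - 1) ⊕ Fin n) (Fin (n - 1) ⊕ Fin n) F),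
      IsUnit R ∧ IsUnit S ∧
      R * (fromBlocks 0 (Lmat n) (-(Lmat n)ᵀ) 0) * S =
        (fromBlocks (Lmat n) 0 0 (Lmat n)ᵀ).submatrix id
          (Equiv.sumComm (Fin (n - 1)) (Fin n)) ∧
      R * (fromBlocks 0 (Rmat n) (-(Rmat n)ᵀ) 0) * S =
        (fromBlocks (Rmat n) 0 0 (Rmat n)ᵀ).submatrix id
          (Equiv.sumComm (Fin (n - 1)) (Fin n)) := by
  refine ⟨fromBlocks 1 0 0 (-1), 1, ?_, isUnit_one, ?_, ?_⟩
  · refine (Matrix.isUnit_iff_isUnit_det _).mpr (Matrix.isUnit_det_of_right_inverse (B := fromBlocks 1 0 0 (-1)) ?_)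
    rw [Matrix.fromBlocks_multiply, ← Matrix.fromBlocks_one]
    simp
  all_goals
    rw [mul_one]
    have : ⇑(Equiv.sumComm (Fin (n - 1)) (Fin n)) = Sum.swap := rfl
    simp [this, Matrix.fromBlocks_multiply]
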